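/- For d > 0, δ > 0, b > 0 with δ < d/b and t̄ = T + (1/δ)ln(1 - bδ/d) > t₀, the piecewise control u(t) = 0 for t₀ ≤ t ≤ t̄ and u(t) = b - d/δ + (d/δ)e^{δ(t-T)} for t̄ ≤ t ≤ T is continuous on [t₀, T] and takes values in [0, b]. -/

import Mathlib

/-- The piecewise optimal control (0 before the switching time t̄, Pontryagin after)
is continuous on [t₀, T] and takes values in [0, b]. -/
theorem stmt13 (δ b d t₀ T : ℝ) (hδ : 0 < δ) (hb : 0 < b) (hd : 0 < d)
    (hlt : δ < d / b)
    (ht : t₀ < T + (1 / δ) * Real.log (1 - b * δ / d))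
    (u : ℝ → ℝ)
    (hu : ∀ t : ℝ, u t =
      if t ≤ T + (1 / δ) * Real.log (1 - b * δ / d) then 0
      else b - d / δ + d / δ * Real.exp (δ * (t - T))) :
    ContinuousOn u (Set.Icc t₀ T) ∧ ∀ t ∈ Set.Icc t₀ T, u t ∈ Set.Icc 0 b := by
  set c : ℝ := 1 - b * δ / d with hcdef
  set tb : ℝ := T + (1 / δ) * Real.log c with htb
  have hδ' : δ ≠ 0 := ne_of_gt hδ
  have hd' : d ≠ 0 := ne_of_gt hd
  have hc : 0 < c := by
    have h1 : δ * b < d := (lt_div_iff₀ hb).mp hlt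
    have h2 : b * δ / d < 1 := (div_lt_one hd).mpr (by linarith)
    simp only [hcdef]; linarith
  have hexp : Real.exp (δ * (tb - T)) = c := by
    have : δ * (tb - T) = Real.log c := by
      rw [htb]; field_simp; ring
    rw [this, Real.exp_log hc]
  have hdc : d / δ * c = d / δ - b := by
    rw [hcdef]; field_simp
  set f : ℝ → ℝ := fun t => b - d / δ + d / δ * Real.exp (δ * (t - T)) with hf
  have key : ∀ t, u t = max 0 (f t) := by
    intro t
    rw [hu t]
    by_cases h : t ≤ tb
    · have hle : Real.exp (δ * (t - T)) ≤ c := by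
        rw [← hexp]
        exact Real.exp_le_exp.mpr (by nlinarith)
      have : f t ≤ 0 := by
        have := mul_le_mul_of_nonneg_left hle (le_of_lt (div_pos hd hδ))
        simp only [hf]; nlinarith
      simp [h, max_eq_left this]
    · push_neg at h
      have hle : c < Real.exp (δ * (t - T)) := by
        rw [← hexp]
        exact Real.exp_lt_exp.mpr (by nlinarith)
      have : 0 ≤ f t := by
        have := mul_le_mul_of_nonneg_left hle.le (le_of_lt (div_pos hd hδ))
        simp only [hf]; nlinarith
      simp [not_le.mpr h, max_eq_right this]
      rfl
  have hcontf : Continuous fun t => max 0 (f t) := by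
    apply continuous_const.max
    exact continuous_const.add (continuous_const.mul (Real.continuous_exp.comp
      (continuous_const.mul (continuous_id.sub continuous_const))))
  constructor
  · exact (hcontf.continuousOn).congr (fun t _ => key t)
  · intro t htm
    rw [key t]
    constructor
    · exact le_max_left _ _
    · have hle1 : Real.exp (δ * (t - T)) ≤ 1 := by
        rw [← Real.exp_zero]
        apply Real.exp_le_exp.mpr
        have := htm.2
        nlinarith
      have hfb : f t ≤ b := by
        have := mul_le_mul_of_nonneg_left hle1 (le_of_lt (div_pos hd hδ))
        simp only [hf]; nlinarith
      exact max_le hb.le hfb
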